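/- Let Ũ = ℂ \ (-∞,0] with hyperbolic density ρ_{Ũ}(w) = 1/(2|w| cos(Arg(w)/2)) (Arg the principal argument). If ζ ∈ Ũ with exp(ζ) ∈ Ũ and Re ζ ≥ 2, then |exp(ζ)| · ρ_{Ũ}(exp(ζ))/ρ_{Ũ}(ζ) ≥ √2. -/

import Mathlib

open Real

/-- Density of the hyperbolic metric of the negatively slit plane `ℂ \ (-∞,0]`. -/
noncomputable def rhoUt (w : ℂ) : ℝ := 1 / (2 * ‖w‖ * Real.cos (Complex.arg w / 2))

theorem exp_strongly_expands_negatively_slit_plane (ζ : ℂ)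
    (hζ : ζ.im ≠ 0 ∨ 0 < ζ.re) (hexp : (Complex.exp ζ).im ≠ 0 ∨ 0 < (Complex.exp ζ).re)
    (hre : 2 ≤ ζ.re) :
    Real.sqrt 2 ≤ ‖Complex.exp ζ‖ * (rhoUt (Complex.exp ζ) / rhoUt ζ) := by
  have hz0 : ζ ≠ 0 := by
    intro h; rw [h] at hre; simp at hre; linarith
  have hA : (2:ℝ) ≤ ‖ζ‖ := le_trans hre (Complex.re_le_norm ζ)
  have hApos : (0:ℝ) < ‖ζ‖ := lt_of_lt_of_le (by norm_num) hA
  have harg1 : |Complex.arg ζ| < π / 2 :=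
    Complex.abs_arg_lt_pi_div_two_iff.2 (Or.inl (by linarith))
  have hc1 : Real.sqrt 2 / 2 ≤ Real.cos (Complex.arg ζ / 2) := by
    have h1 : Real.cos (π/4) ≤ Real.cos |Complex.arg ζ / 2| := by
      apply Real.cos_le_cos_of_nonneg_of_le_pi (abs_nonneg _)
      · linarith [Real.pi_pos]
      · rw [abs_div, abs_of_pos (by norm_num : (0:ℝ) < 2)]
        linarith [harg1]
    rw [Real.cos_abs, Real.cos_pi_div_four] at h1
    exact h1
  -- arg of exp ζ
  have hne : Complex.arg (Complex.exp ζ) ≠ π := by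
    intro h
    rw [Complex.arg_eq_pi_iff] at h
    rcases hexp with h1 | h1
    · exact h1 h.2
    · linarith [h.1]
  have hlt : Complex.arg (Complex.exp ζ) < π :=
    lt_of_le_of_ne (Complex.arg_le_pi _) hne
  have hgt : -π < Complex.arg (Complex.exp ζ) := Complex.neg_pi_lt_arg _
  have hc2pos : 0 < Real.cos (Complex.arg (Complex.exp ζ) / 2) := by
    apply Real.cos_pos_of_mem_Ioo
    constructor <;> [linarith; linarith]
  have hc2le : Real.cos (Complex.arg (Complex.exp ζ) / 2) ≤ 1 := Real.cos_le_one _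
  have hc1pos : 0 < Real.cos (Complex.arg ζ / 2) :=
    lt_of_lt_of_le (by positivity) hc1
  have hE : (0:ℝ) < ‖Complex.exp ζ‖ :=
    norm_pos_iff.mpr (Complex.exp_ne_zero ζ)
  have key : ‖Complex.exp ζ‖ * (rhoUt (Complex.exp ζ) / rhoUt ζ) =
      ‖ζ‖ * Real.cos (Complex.arg ζ / 2) /
        Real.cos (Complex.arg (Complex.exp ζ) / 2) := by
    unfold rhoUt
    field_simp
  rw [key, le_div_iff₀ hc2pos]
  have hs : (0:ℝ) ≤ Real.sqrt 2 := Real.sqrt_nonneg 2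
  nlinarith [mul_le_mul hA hc1 (by positivity : (0:ℝ) ≤ Real.sqrt 2 / 2) (le_of_lt hApos), Real.sq_sqrt (by norm_num : (2:ℝ) ≥ 0)]
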